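/- Let L be a rational subspace of ℝ^n (i.e., L has a basis of vectors with rational entries) and let B be an n×k real matrix whose columns form a rational basis of L. Then for every sign vector s ∈ sign(L), there exists a rational vector x ∈ ℚ^k such that sign(Bx) = s. -/

import Mathlib

open Matrix

noncomputable section

def signVec {n : ℕ} (x : Fin n → ℝ) : Fin n → SignType := fun i => SignType.sign (x i)

def signSet {n : ℕ} (L : Submodule ℝ (Fin n → ℝ)) : Set (Fin n → SignType) :=
  signVec '' (L : Set (Fin n → ℝ))

def IsRationalVec {n : ℕ} (v : Fin n → ℝ) : Prop := ∀ i, ∃ q : ℚ, v i = (q : ℝ)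

def IsRationalSubspace {n : ℕ} (K : Submodule ℝ (Fin n → ℝ)) : Prop :=
  ∃ s : Set (Fin n → ℝ), (∀ v ∈ s, IsRationalVec v) ∧ Submodule.span ℝ s = K

def IsRationalMatrix {m n : ℕ} (B : Matrix (Fin m) (Fin n) ℝ) : Prop :=
  ∀ i j, ∃ q : ℚ, B i j = (q : ℝ)

def mr {m n : ℕ} (A : Matrix (Fin m) (Fin n) SignType) : ℕ :=
  sInf {r | ∃ B : Matrix (Fin m) (Fin n) ℝ, (∀ i j, SignType.sign (B i j) = A i j) ∧ B.rank = r}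

def SignPerp {n : ℕ} (c x : Fin n → SignType) : Prop :=
  (∀ i, c i = 0 ∨ x i = 0) ∨
  (∃ i j, c i = x i ∧ c i ≠ 0 ∧ c j = -(x j) ∧ c j ≠ 0)

lemma decompQ {n k : ℕ} (A : Matrix (Fin n) (Fin k) ℚ) (x : Fin k → ℚ) :
    ∃ z y, A.mulVec z = 0 ∧ x = z + Aᵀ.mulVec y := by
  have hle : LinearMap.range (A * Aᵀ).mulVecLin ≤ LinearMap.range A.mulVecLin := by
    rw [Matrix.mulVecLin_mul]
    exact LinearMap.range_comp_le_range _ _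
  have hrange : LinearMap.range (A * Aᵀ).mulVecLin = LinearMap.range A.mulVecLin := by
    apply Submodule.eq_of_le_of_finrank_le hle
    have h1 := Matrix.rank_self_mul_transpose A
    rw [Matrix.rank, Matrix.rank] at h1
    exact le_of_eq h1.symm
  have hmem : A.mulVec x ∈ LinearMap.range (A * Aᵀ).mulVecLin := by
    rw [hrange]; exact ⟨x, rfl⟩
  obtain ⟨y, hy⟩ := hmem
  refine ⟨x - Aᵀ.mulVec y, y, ?_, by abel⟩
  rw [Matrix.mulVec_sub, Matrix.mulVec_mulVec]
  rw [Matrix.mulVecLin_apply] at hy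
  rw [hy]; simp

lemma realKer {n k : ℕ} (AR : Matrix (Fin n) (Fin k) ℝ) (v : Fin n → ℝ)
    (h : AR.mulVec (ARᵀ.mulVec v) = 0) : ARᵀ.mulVec v = 0 := by
  have h2 := Matrix.ker_mulVecLin_transpose_mul_self (R := ℝ) ARᵀ
  rw [Matrix.transpose_transpose] at h2
  have hv : v ∈ LinearMap.ker (AR * ARᵀ).mulVecLin := by
    rw [LinearMap.mem_ker, Matrix.mulVecLin_apply, ← Matrix.mulVec_mulVec]
    exact h
  rw [h2, LinearMap.mem_ker, Matrix.mulVecLin_apply] at hv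
  exact hv

lemma castMulVec {m k : ℕ} (M : Matrix (Fin m) (Fin k) ℚ) (v : Fin k → ℚ) :
    (fun i => ((M.mulVec v i : ℚ) : ℝ)) = (M.map ((↑) : ℚ → ℝ)).mulVec (fun j => (v j : ℝ)) := by
  funext i
  have := RingHom.map_mulVec (Rat.castHom ℝ) M v i
  simpa [Function.comp_def] using this

theorem stmt_1 {n k : ℕ} (L : Submodule ℝ (Fin n → ℝ))
    (B : Matrix (Fin n) (Fin k) ℝ)
    (hrat : ∀ j, IsRationalVec (fun i => B i j))
    (hind : LinearIndependent ℝ (fun j => fun i => B i j))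
    (hspan : Submodule.span ℝ (Set.range (fun j => fun i => B i j)) = L)
    (s : Fin n → SignType) (hs : s ∈ signSet L) :
    ∃ x : Fin k → ℚ, signVec (B.mulVec (fun j => (x j : ℝ))) = s := by
  classical
  obtain ⟨y, hyL, hysign⟩ := hs
  rw [← hspan] at hyL
  obtain ⟨c, hc⟩ := (Submodule.mem_span_range_iff_exists_fun ℝ).1 hyL
  have hyc : B.mulVec c = y := by
    funext i
    rw [← hc]
    simp [Matrix.mulVec, dotProduct, Finset.sum_apply, mul_comm]
  choose Bq hBq using fun j => hrat j
  set A : Matrix (Fin n) (Fin k) ℚ := fun i j => if s i = 0 then Bq j i else 0 with hA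
  have hAmap : ∀ i j, ((A i j : ℚ) : ℝ) = if s i = 0 then B i j else 0 := by
    intro i j
    by_cases hsi : s i = 0 <;> simp [hA, hsi, hBq j i]
  have hBA : ∀ i j, s i = 0 → B i j = ((A i j : ℚ) : ℝ) := by
    intro i j hsi
    rw [hAmap i j, if_pos hsi]
  have hszero : ∀ i, s i = 0 → y i = 0 := by
    intro i hi
    have h0 : SignType.sign (y i) = 0 := by
      have := congrFun hysign i
      rwa [hi] at this
    exact sign_eq_zero_iff.1 h0
  have hkerc : (A.map ((↑) : ℚ → ℝ)).mulVec c = 0 := by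
    funext i
    by_cases hsi : s i = 0
    · have heq : (A.map ((↑) : ℚ → ℝ)).mulVec c i = B.mulVec c i := by
        simp only [Matrix.mulVec, dotProduct, Matrix.map_apply]
        refine Finset.sum_congr rfl fun j _ => ?_
        rw [hAmap i j, if_pos hsi]
      rw [heq, hyc, hszero i hsi]; rfl
    · simp only [Matrix.mulVec, dotProduct, Matrix.map_apply, Pi.zero_apply]
      refine Finset.sum_eq_zero fun j _ => ?_
      rw [hAmap i j, if_neg hsi, zero_mul]
  choose z yy hz hzy using fun b => decompQ A (Pi.single b 1)
  set AR : Matrix (Fin n) (Fin k) ℝ := A.map ((↑) : ℚ → ℝ) with hAR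
  have hARt : (Aᵀ).map ((↑) : ℚ → ℝ) = ARᵀ := by
    rw [Matrix.transpose_map]
  have hsingle : ∀ b : Fin k, (Pi.single b (1:ℝ) : Fin k → ℝ)
      = (fun j => ((z b j : ℚ) : ℝ)) + ARᵀ.mulVec (fun i => ((yy b i : ℚ) : ℝ)) := by
    intro b
    have h1 : (fun j => (((Pi.single b 1 : Fin k → ℚ) j : ℚ) : ℝ)) = Pi.single b (1:ℝ) := by
      funext j
      simp [Pi.single_apply, apply_ite ((↑) : ℚ → ℝ)]
    rw [← h1]
    funext j
    have h3 := congrFun (castMulVec Aᵀ (yy b)) j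
    rw [hARt] at h3
    simp only [hzy b, Pi.add_apply, Rat.cast_add, h3]
  set w : Fin k → ℝ := ∑ b, c b • (fun j => ((z b j : ℚ) : ℝ)) with hw
  set u : Fin n → ℝ := ∑ b, c b • (fun i => ((yy b i : ℚ) : ℝ)) with hu
  have hcdec : c = w + ARᵀ.mulVec u := by
    have hcs : c = ∑ b, c b • (Pi.single b (1:ℝ) : Fin k → ℝ) := by
      funext j
      simp [Finset.sum_apply, Pi.single_apply, mul_ite, mul_one, mul_zero]
    rw [hcs]
    have : ARᵀ.mulVec u = ∑ b, c b • ARᵀ.mulVec (fun i => ((yy b i : ℚ) : ℝ)) := by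
      show ARᵀ.mulVecLin u = _
      rw [hu, map_sum]
      simp [Matrix.mulVec_transpose]
    rw [this, hw, ← Finset.sum_add_distrib]
    refine Finset.sum_congr rfl fun b _ => ?_
    rw [hsingle b, smul_add]
  have hARw : AR.mulVec w = 0 := by
    show AR.mulVecLin w = 0
    rw [hw, map_sum]
    refine Finset.sum_eq_zero fun b _ => ?_
    rw [_root_.map_smul]
    have : AR.mulVec (fun j => ((z b j : ℚ) : ℝ)) = 0 := by
      rw [← castMulVec A (z b), hz b]
      funext i; simp
    simp [Matrix.mulVecLin_apply, this]
  have hAAu : AR.mulVec (ARᵀ.mulVec u) = 0 := by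
    have h := hkerc
    rw [hcdec, Matrix.mulVec_add, hARw, zero_add] at h
    exact h
  have hu0 : ARᵀ.mulVec u = 0 := realKer AR u hAAu
  have hcw : c = w := by rw [hcdec, hu0, add_zero]
  rw [hw] at hcw
  set M : Matrix (Fin n) (Fin k) ℝ := fun i b => (B.mulVec (fun j => ((z b j : ℚ) : ℝ))) i with hM
  have hlin : ∀ a : Fin k → ℝ, B.mulVec (∑ b, a b • (fun j => ((z b j : ℚ) : ℝ))) = M.mulVec a := by
    intro a
    have h1 : B.mulVec (∑ b, a b • (fun j => ((z b j : ℚ) : ℝ)))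
        = ∑ b, a b • B.mulVec (fun j => ((z b j : ℚ) : ℝ)) := by
      show B.mulVecLin _ = _
      rw [map_sum]; simp
    rw [h1]
    funext i
    simp [Matrix.mulVec, dotProduct, Finset.sum_apply, hM, mul_comm]
  have hMc : M.mulVec c = y := by rw [← hlin c, ← hcw, hyc]
  have hMcont : ∀ i : Fin n, Continuous (fun a : Fin k → ℝ => (M.mulVec a) i) := by
    intro i
    simp only [Matrix.mulVec, dotProduct]
    exact continuous_finset_sum _ fun b _ => continuous_const.mul (continuous_apply b)
  set U : Set (Fin k → ℝ) := ⋂ i : Fin n, {a | s i ≠ 0 → 0 < ((s i : ℝ)) * (M.mulVec a) i} with hU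
  have hUopen : IsOpen U := by
    apply isOpen_iInter_of_finite
    intro i
    by_cases hsi : s i = 0
    · have : {a : Fin k → ℝ | s i ≠ 0 → 0 < ((s i : ℝ)) * (M.mulVec a) i} = Set.univ := by
        ext a; simp [hsi]
      rw [this]; exact isOpen_univ
    · have : {a : Fin k → ℝ | s i ≠ 0 → 0 < ((s i : ℝ)) * (M.mulVec a) i}
          = {a | 0 < ((s i : ℝ)) * (M.mulVec a) i} := by
        ext a; simp [hsi]
      rw [this]
      exact isOpen_lt continuous_const (continuous_const.mul (hMcont i))
  have hcU : c ∈ U := by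
    rw [hU]
    simp only [Set.mem_iInter, Set.mem_setOf_eq]
    intro i hsi
    rw [hMc]
    have hsy : SignType.sign (y i) = s i := congrFun hysign i
    rcases hsv : s i with _ | _ | _
    · exact absurd hsv hsi
    · rw [hsv] at hsy
      have hneg : y i < 0 := sign_eq_neg_one_iff.mp hsy
      simp only [SignType.neg_eq_neg_one, SignType.coe_neg_one]
      linarith
    · rw [hsv] at hsy
      have hpos : 0 < y i := sign_eq_one_iff.mp hsy
      simp only [SignType.pos_eq_one, SignType.coe_one]
      linarith
  have hdense : Dense (Set.pi Set.univ fun _ : Fin k => Set.range ((↑) : ℚ → ℝ)) :=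
    dense_pi Set.univ fun i _ => Rat.denseRange_cast
  obtain ⟨r, hrD, hrU⟩ := hdense.exists_mem_open hUopen ⟨c, hcU⟩
  choose ρ hρ using fun b => hrD b (Set.mem_univ b)
  set x : Fin k → ℚ := fun j => ∑ b, ρ b * z b j with hx
  have hcast : (fun j => ((x j : ℚ) : ℝ)) = ∑ b, r b • (fun j => ((z b j : ℚ) : ℝ)) := by
    funext j
    simp only [hx, Finset.sum_apply, Pi.smul_apply, smul_eq_mul]
    push_cast
    exact Finset.sum_congr rfl fun b _ => by rw [hρ b]
  have hBx : B.mulVec (fun j => ((x j : ℚ) : ℝ)) = M.mulVec r := by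
    rw [hcast, hlin r]
  have hAx : A.mulVec x = 0 := by
    have hx2 : x = ∑ b, ρ b • z b := by
      funext j; simp [hx, Finset.sum_apply]
    show A.mulVecLin x = 0
    rw [hx2, map_sum]
    refine Finset.sum_eq_zero fun b _ => ?_
    rw [_root_.map_smul]
    simp [Matrix.mulVecLin_apply, hz b]
  refine ⟨x, ?_⟩
  funext i
  show SignType.sign ((B.mulVec (fun j => ((x j : ℚ) : ℝ))) i) = s i
  rcases hsv : s i with _ | _ | _
  · have hzero : (B.mulVec (fun j => ((x j : ℚ) : ℝ))) i = 0 := by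
      have : (B.mulVec (fun j => ((x j : ℚ) : ℝ))) i = ((A.mulVec x i : ℚ) : ℝ) := by
        simp only [Matrix.mulVec, dotProduct]
        push_cast
        refine Finset.sum_congr rfl fun j _ => by rw [hBA i j hsv]
      rw [this, hAx]
      simp
    rw [hzero]
    simp
  · have hval := Set.mem_iInter.mp hrU i (by rw [hsv]; simp)
    rw [hsv] at hval
    norm_num at hval
    rw [← hBx] at hval
    exact sign_eq_neg_one_iff.mpr (by linarith)
  · have hval := Set.mem_iInter.mp hrU i (by rw [hsv]; simp)
    rw [hsv] at hval
    norm_num at hval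
    rw [← hBx] at hval
    exact sign_eq_one_iff.mpr (by linarith)
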